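/- arXiv:1911.07816 — 3 statements merged into one kernel-verified Lean document; each statement's English description precedes it below -/
import Mathlib

section
/- Let Δ > 0, B ∈ ℕ, A_{Δ,B} the uniform B-bit alphabet and q the corresponding nearest-point quantizer. Set M = (2^{B−1}−1)Δ − Δ/2. If τ ∼ Unif([−Δ, Δ]), then for all x ∈ [−M, M], E_τ[q(x + τ)] = x. -/
open MeasureTheory intervalIntegral

/-- The uniform B-bit quantization alphabet with resolution Δ. -/
def alphabet (Δ : ℝ) (B : ℕ) : Set ℝ :=
  {l | ∃ j : ℤ, -(2 ^ (B - 1) : ℤ) ≤ j ∧ j ≤ 2 ^ (B - 1) - 1 ∧ l = (2 * j + 1) * Δ / 2}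

open MeasureTheory intervalIntegral

lemma fract_intervalIntegrable' (x Δ a b : ℝ) :
    IntervalIntegrable (fun s => Int.fract ((x + s) / Δ)) volume a b := by
  rw [intervalIntegrable_iff]
  have hfin : volume (Set.uIoc a b) < ⊤ := measure_Ioc_lt_top
  refine ((integrableOn_const (C := (1:ℝ)) hfin.ne (by simp)) : IntegrableOn (fun _ => (1:ℝ)) _ _).mono'
    ((measurable_fract.comp
      ((measurable_const.add measurable_id).div_const Δ)).aestronglyMeasurable) ?_
  filter_upwards with s
  rw [Real.norm_eq_abs, abs_of_nonneg (Int.fract_nonneg _)]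
  exact (Int.fract_lt_one _).le

lemma fract_intervalIntegrable (a b : ℝ) :
    IntervalIntegrable Int.fract volume a b := by
  rw [intervalIntegrable_iff]
  have hfin : volume (Set.uIoc a b) < ⊤ := measure_Ioc_lt_top
  refine ((integrableOn_const (C := (1:ℝ)) hfin.ne (by simp)) : IntegrableOn (fun _ => (1:ℝ)) _ _).mono'
    measurable_fract.aestronglyMeasurable ?_
  filter_upwards with s
  rw [Real.norm_eq_abs, abs_of_nonneg (Int.fract_nonneg _)]
  exact (Int.fract_lt_one _).le

lemma integral_fract_zero_one : ∫ v in (0:ℝ)..1, Int.fract v = 1/2 := by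
  have h : ∫ v in (0:ℝ)..1, Int.fract v = ∫ v in (0:ℝ)..1, v := by
    apply intervalIntegral.integral_congr_ae
    have h1 : ∀ᵐ v : ℝ, v ≠ 1 := by
      rw [ae_iff]
      simpa using measure_singleton (1 : ℝ)
    filter_upwards [h1] with v hv hmem
    rw [Set.uIoc_of_le zero_le_one] at hmem
    exact Int.fract_eq_self.2 ⟨hmem.1.le, lt_of_le_of_ne hmem.2 hv⟩
  rw [h, integral_id]
  norm_num

lemma integral_fract_period (t : ℝ) : ∫ v in t..(t+1), Int.fract v = 1/2 := by
  have hper : Function.Periodic Int.fract (1:ℝ) := Int.fract_add_one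
  have := hper.intervalIntegral_add_eq t 0
  simpa [integral_fract_zero_one] using this

lemma q_eq_floor (Δ : ℝ) (hΔ : 0 < Δ) (B : ℕ) (q : ℝ → ℝ)
    (hq : ∀ y : ℝ, q y ∈ alphabet Δ B ∧ ∀ l ∈ alphabet Δ B, |y - q y| ≤ |y - l|)
    (y : ℝ) (hy : |y| ≤ (2:ℝ)^(B-1) * Δ - Δ/2) (hf : Int.fract (y/Δ) ≠ 0) :
    q y = Δ * ⌊y/Δ⌋ + Δ/2 := by
  set j : ℤ := ⌊y / Δ⌋ with hj
  have hcast : ((2:ℤ)^(B-1) : ℝ) = (2:ℝ)^(B-1) := by push_cast; ring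
  have habs := abs_le.1 hy
  have hpow : (0:ℝ) < (2:ℝ)^(B-1) := by positivity
  -- index bounds
  have hub : j ≤ 2^(B-1) - 1 := by
    have h1 : (j:ℝ) ≤ y / Δ := Int.floor_le _
    have h2 : y / Δ < (2:ℝ)^(B-1) := by
      rw [div_lt_iff₀ hΔ]; nlinarith [habs.2]
    have : (j:ℝ) < ((2:ℤ)^(B-1) : ℝ) := by rw [hcast]; linarith
    have : j < (2:ℤ)^(B-1) := by exact_mod_cast this
    omega
  have hlb : -(2:ℤ)^(B-1) ≤ j := by
    apply Int.le_floor.2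
    rw [le_div_iff₀ hΔ]
    push_cast
    nlinarith [habs.1]
  have hl_mem : (2 * (j:ℝ) + 1) * Δ / 2 ∈ alphabet Δ B := ⟨j, hlb, hub, by push_cast; ring⟩
  -- fract facts
  have hf0 : 0 < Int.fract (y / Δ) := lt_of_le_of_ne (Int.fract_nonneg _) (Ne.symm hf)
  have hf1 : Int.fract (y / Δ) < 1 := Int.fract_lt_one _
  have hyeq : y = Δ * ((j:ℝ) + Int.fract (y / Δ)) := by
    rw [hj, Int.floor_add_fract]
    field_simp
  have hclose : |y - (2 * (j:ℝ) + 1) * Δ / 2| < Δ / 2 := by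
    rw [hyeq, abs_lt]
    constructor <;> nlinarith
  obtain ⟨hqmem, hqnear⟩ := hq y
  obtain ⟨j', hlb', hub', hqeq⟩ := hqmem
  have hqclose : |y - q y| < Δ / 2 := lt_of_le_of_lt (hqnear _ hl_mem) hclose
  have hdiff : |(j':ℝ) - j| * Δ < Δ := by
    have h3 : |q y - (2 * (j:ℝ) + 1) * Δ / 2| < Δ := by
      calc |q y - (2 * (j:ℝ) + 1) * Δ / 2|
          ≤ |q y - y| + |y - (2 * (j:ℝ) + 1) * Δ / 2| := abs_sub_le _ _ _
        _ < Δ / 2 + Δ / 2 := by rw [abs_sub_comm]; exact add_lt_add hqclose hclose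
        _ = Δ := by ring
    have h4 : q y - (2 * (j:ℝ) + 1) * Δ / 2 = ((j':ℝ) - j) * Δ := by rw [hqeq]; push_cast; ring
    rw [h4, abs_mul, abs_of_pos hΔ] at h3
    exact h3
  have hjj : j' = j := by
    have : |(j':ℝ) - j| < 1 := by
      by_contra hcon
      push_neg at hcon
      nlinarith
    have : |((j' - j : ℤ) : ℝ)| < 1 := by push_cast; exact this
    have h5 : |j' - j| < 1 := by exact_mod_cast this
    have := abs_lt.1 h5
    omega
  rw [hqeq, hjj]
  push_cast
  ring

theorem dithered_quantizer_unbiased (Δ : ℝ) (hΔ : 0 < Δ) (B : ℕ) (hB : 1 ≤ B)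
    (q : ℝ → ℝ)
    (hq : ∀ y : ℝ, q y ∈ alphabet Δ B ∧ ∀ l ∈ alphabet Δ B, |y - q y| ≤ |y - l|)
    (x : ℝ) (hx : |x| ≤ ((2 : ℝ) ^ (B - 1) - 1) * Δ - Δ / 2) :
    (1 / (2 * Δ)) * ∫ s in (-Δ)..Δ, q (x + s) = x := by
  -- Step 1: a.e. identification of q with the floor formula
  have hnull : volume {s : ℝ | Int.fract ((x + s) / Δ) = 0} = 0 := by
    refine measure_mono_null ?_ ((Set.countable_range (fun k : ℤ => (k : ℝ) * Δ - x)).measure_zero volume)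
    intro s hs
    simp only [Set.mem_setOf_eq] at hs
    have hfl : (x + s) / Δ = (⌊(x + s) / Δ⌋ : ℝ) := by
      have h2 : (x + s) / Δ - ⌊(x + s) / Δ⌋ = Int.fract ((x + s) / Δ) := Int.self_sub_floor _
      rw [hs] at h2
      linarith
    refine ⟨⌊(x + s) / Δ⌋, ?_⟩
    have hxs : x + s = (⌊(x + s) / Δ⌋ : ℝ) * Δ := by
      field_simp at hfl
      linarith [hfl]
    linarith
  have key : ∀ᵐ s : ℝ, s ∈ Set.uIoc (-Δ) Δ → q (x + s) = Δ * ⌊(x + s) / Δ⌋ + Δ / 2 := by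
    filter_upwards [compl_mem_ae_iff.mpr hnull] with s hs hmem
    apply q_eq_floor Δ hΔ B q hq
    · rw [Set.uIoc_of_le (by linarith : -Δ ≤ Δ)] at hmem
      have habs : |s| ≤ Δ := abs_le.2 ⟨hmem.1.le, hmem.2⟩
      calc |x + s| ≤ |x| + |s| := abs_add_le _ _
        _ ≤ (((2:ℝ)^(B-1) - 1) * Δ - Δ/2) + Δ := add_le_add hx habs
        _ = (2:ℝ)^(B-1) * Δ - Δ/2 := by ring
    · exact hs
  rw [intervalIntegral.integral_congr_ae key]
  -- Step 2: rewrite integrand via fract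
  have hcongr2 : (∫ s in (-Δ)..Δ, (Δ * ⌊(x + s) / Δ⌋ + Δ / 2))
      = ∫ s in (-Δ)..Δ, ((x + s + Δ / 2) - Δ * Int.fract ((x + s) / Δ)) := by
    apply intervalIntegral.integral_congr
    intro s _
    show Δ * ⌊(x + s) / Δ⌋ + Δ / 2 = x + s + Δ / 2 - Δ * Int.fract ((x + s) / Δ)
    rw [← Int.self_sub_floor ((x + s) / Δ)]
    field_simp
    ring
  rw [hcongr2]
  have hA : IntervalIntegrable (fun s : ℝ => x + s + Δ / 2) volume (-Δ) Δ :=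
    (Continuous.intervalIntegrable (by continuity) _ _)
  rw [intervalIntegral.integral_sub hA ((fract_intervalIntegrable' x Δ (-Δ) Δ).const_mul Δ)]
  -- Step 3: compute the linear part
  have hlin : (∫ s in (-Δ)..Δ, (x + s + Δ / 2)) = 2 * Δ * x + Δ * Δ := by
    have hfun : (fun s : ℝ => x + s + Δ / 2) = fun s : ℝ => (x + Δ / 2) + s := by
      funext s; ring
    rw [hfun, intervalIntegral.integral_add (intervalIntegrable_const) intervalIntegrable_id,
      intervalIntegral.integral_const, integral_id]
    simp
    ring
  -- Step 4: compute the fract part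
  have hfr : (∫ s in (-Δ)..Δ, Δ * Int.fract ((x + s) / Δ)) = Δ * Δ := by
    rw [intervalIntegral.integral_const_mul]
    have h1 : (∫ s in (-Δ)..Δ, Int.fract ((x + s) / Δ))
        = ∫ u in (x + -Δ)..(x + Δ), Int.fract (u / Δ) :=
      intervalIntegral.integral_comp_add_left (fun u => Int.fract (u / Δ)) x
    have h2 : (∫ u in (x + -Δ)..(x + Δ), Int.fract (u / Δ))
        = Δ • ∫ v in ((x + -Δ)/Δ)..((x + Δ)/Δ), Int.fract v :=
      intervalIntegral.integral_comp_div _ hΔ.ne'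
    have h3 : (x + -Δ)/Δ = x/Δ - 1 := by field_simp; ring
    have h4 : (x + Δ)/Δ = x/Δ + 1 := by field_simp
    have h5 : (∫ v in (x/Δ - 1)..(x/Δ + 1), Int.fract v) = 1 := by
      have hsplit : (∫ v in (x/Δ - 1)..(x/Δ), Int.fract v)
          + (∫ v in (x/Δ)..(x/Δ + 1), Int.fract v)
          = ∫ v in (x/Δ - 1)..(x/Δ + 1), Int.fract v :=
        intervalIntegral.integral_add_adjacent_intervals
          (fract_intervalIntegrable _ _) (fract_intervalIntegrable _ _)
      have e1 : (∫ v in (x/Δ - 1)..(x/Δ), Int.fract v) = 1/2 := by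
        have := integral_fract_period (x/Δ - 1)
        simpa using this
      have e2 : (∫ v in (x/Δ)..(x/Δ + 1), Int.fract v) = 1/2 := integral_fract_period _
      rw [← hsplit, e1, e2]
      norm_num
    rw [h1, h2, h3, h4, h5]
    simp
  rw [hlin, hfr]
  field_simp
  ring
end

section
/- With the uniform B-bit quantizer q with resolution Δ, dither τ ∼ Unif([−Δ,Δ]) and M = (2^{B−1}−1)Δ − Δ/2: for all x, y ∈ [−M, M], E_τ[|q(x + τ) − q(y + τ)|] = |x − y|. -/
open MeasureTheory intervalIntegral Set

/-- On the open cell `(kΔ, (k+1)Δ)` (with `k` in range), the nearest-point quantizer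
takes the value `(2k+1)Δ/2`. -/
lemma quant_cell (Δ : ℝ) (hΔ : 0 < Δ) (B : ℕ)
    (q : ℝ → ℝ)
    (hq : ∀ y : ℝ, q y ∈ alphabet Δ B ∧ ∀ l ∈ alphabet Δ B, |y - q y| ≤ |y - l|)
    (z : ℝ) (k : ℤ) (hk1 : -(2 ^ (B - 1) : ℤ) ≤ k) (hk2 : k ≤ 2 ^ (B - 1) - 1)
    (h1 : (k : ℝ) * Δ < z) (h2 : z < ((k : ℝ) + 1) * Δ) :
    q z = (2 * (k : ℝ) + 1) * Δ / 2 := by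
  obtain ⟨⟨j, hj1, hj2, hjq⟩, hmin⟩ := hq z
  have hmem : ((2 * (k : ℝ) + 1) * Δ / 2) ∈ alphabet Δ B := ⟨k, hk1, hk2, by push_cast; ring⟩
  have hclose : |z - (2 * (k : ℝ) + 1) * Δ / 2| < Δ / 2 := by
    rw [abs_lt]; constructor <;> nlinarith
  have habs : |z - (2 * (j : ℝ) + 1) * Δ / 2| < Δ / 2 := by
    rw [← hjq]; exact lt_of_le_of_lt (hmin _ hmem) hclose
  obtain ⟨ha, hb⟩ := abs_lt.mp habs
  have h3 : (k : ℝ) - 1 < (j : ℝ) := by nlinarith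
  have h4 : (j : ℝ) < (k : ℝ) + 1 := by nlinarith
  have h5 : (k : ℤ) - 1 < j := by exact_mod_cast (by push_cast; linarith : ((k - 1 : ℤ) : ℝ) < (j : ℝ))
  have h6 : (j : ℤ) < k + 1 := by exact_mod_cast (by push_cast; linarith : ((j : ℤ) : ℝ) < ((k + 1 : ℤ) : ℝ))
  have : j = k := by omega
  subst this
  exact hjq

/-- Off the lattice points, in the unsaturated range, the quantizer is given by the
fractional-part formula. -/
lemma quant_formula (Δ : ℝ) (hΔ : 0 < Δ) (B : ℕ)
    (q : ℝ → ℝ)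
    (hq : ∀ y : ℝ, q y ∈ alphabet Δ B ∧ ∀ l ∈ alphabet Δ B, |y - q y| ≤ |y - l|)
    (z : ℝ) (hz : |z| ≤ (2 : ℝ) ^ (B - 1) * Δ - Δ / 2)
    (hnz : ∀ n : ℤ, z ≠ (n : ℝ) * Δ) :
    q z = z - Δ * Int.fract (z / Δ) + Δ / 2 := by
  set k := ⌊z / Δ⌋ with hk
  obtain ⟨hza, hzb⟩ := abs_le.mp hz
  have hk1 : -(2 ^ (B - 1) : ℤ) ≤ k := by
    rw [hk, Int.le_floor]
    push_cast
    rw [le_div_iff₀ hΔ]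
    nlinarith
  have hk2 : k ≤ 2 ^ (B - 1) - 1 := by
    have : k < 2 ^ (B - 1) := by
      rw [hk, Int.floor_lt]
      push_cast
      rw [div_lt_iff₀ hΔ]
      nlinarith
    omega
  have hne : (k : ℝ) ≠ z / Δ := by
    intro h
    exact hnz k (by field_simp at h; linarith)
  have hlt : (k : ℝ) * Δ < z := by
    have h1 : (k : ℝ) < z / Δ := lt_of_le_of_ne (Int.floor_le _) hne
    calc (k : ℝ) * Δ < (z / Δ) * Δ := by nlinarith
    _ = z := by field_simp
  have hlt2 : z < ((k : ℝ) + 1) * Δ := by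
    have h1 : z / Δ < (k : ℝ) + 1 := Int.lt_floor_add_one _
    calc z = (z / Δ) * Δ := by field_simp
    _ < ((k : ℝ) + 1) * Δ := by nlinarith
  rw [quant_cell Δ hΔ B q hq z k hk1 hk2 hlt hlt2, Int.fract, ← hk]
  field_simp
  ring

/-- Interval integrability of the translated fractional part. -/
lemma fract_intble (Δ : ℝ) (hΔ : 0 < Δ) (c a b : ℝ) :
    IntervalIntegrable (fun s => Int.fract ((c + s) / Δ)) volume a b := by
  apply IntervalIntegrable.mono_fun' (g := fun _ => (1 : ℝ)) intervalIntegrable_const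
  · exact (measurable_fract.comp
      ((measurable_const.add measurable_id).div_const Δ)).aestronglyMeasurable
  · refine Filter.Eventually.of_forall fun s => ?_
    show ‖Int.fract ((c + s) / Δ)‖ ≤ 1
    rw [Real.norm_eq_abs, abs_of_nonneg (Int.fract_nonneg ((c + s) / Δ))]
    exact (Int.fract_lt_one _).le

/-- The integral of the translated fractional part over two full periods is
independent of the translation. -/
lemma fract_shift (Δ : ℝ) (hΔ : 0 < Δ) (c d : ℝ) :
    ∫ s in (-Δ)..Δ, Int.fract ((c + s) / Δ) = ∫ s in (-Δ)..Δ, Int.fract ((d + s) / Δ) := by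
  have hper : Function.Periodic (fun t => Int.fract (t / Δ)) Δ := by
    intro t
    simp [add_div, div_self hΔ.ne', Int.fract_add_one]
  have hper2 : Function.Periodic (fun t => Int.fract (t / Δ)) (2 * Δ) := by
    intro t
    have h1 := hper (t + Δ)
    have h2 := hper t
    simp only at h1 h2 ⊢
    rw [show t + 2 * Δ = t + Δ + Δ by ring, h1, h2]
  have key : ∀ c : ℝ, ∫ s in (-Δ)..Δ, Int.fract ((c + s) / Δ)
      = ∫ t in (0 : ℝ)..(0 + 2 * Δ), Int.fract (t / Δ) := by
    intro c
    have h1 : ∫ s in (-Δ)..Δ, (fun t => Int.fract (t / Δ)) (c + s)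
        = ∫ t in (c + -Δ)..(c + Δ), Int.fract (t / Δ) :=
      intervalIntegral.integral_comp_add_left (fun t => Int.fract (t / Δ)) c
    simp only at h1
    rw [h1, show c + Δ = (c + -Δ) + 2 * Δ by ring]
    exact hper2.intervalIntegral_add_eq (c + -Δ) 0
  rw [key c, key d]

lemma key_lemma (Δ : ℝ) (hΔ : 0 < Δ) (B : ℕ) (hB : 1 ≤ B)
    (q : ℝ → ℝ)
    (hq : ∀ y : ℝ, q y ∈ alphabet Δ B ∧ ∀ l ∈ alphabet Δ B, |y - q y| ≤ |y - l|)
    (hmono : Monotone q)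
    (x y : ℝ) (hx : |x| ≤ ((2 : ℝ) ^ (B - 1) - 1) * Δ - Δ / 2)
    (hy : |y| ≤ ((2 : ℝ) ^ (B - 1) - 1) * Δ - Δ / 2) (hxy : x ≤ y) :
    (1 / (2 * Δ)) * ∫ s in (-Δ)..Δ, |q (x + s) - q (y + s)| = y - x := by
  set S : Set ℝ := (⋃ n : ℤ, {((n : ℝ) * Δ - x)}) ∪ ⋃ n : ℤ, {((n : ℝ) * Δ - y)} with hS
  have hSc : S.Countable :=
    (Set.countable_iUnion fun n => Set.countable_singleton _).union
      (Set.countable_iUnion fun n => Set.countable_singleton _)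
  have hS0 : volume S = 0 := hSc.measure_zero _
  have hae : ∀ᵐ s ∂(volume : Measure ℝ), s ∈ Set.uIoc (-Δ) Δ →
      |q (x + s) - q (y + s)|
        = (y - x) + Δ * (Int.fract ((x + s) / Δ) - Int.fract ((y + s) / Δ)) := by
    have hnm : ∀ᵐ s ∂(volume : Measure ℝ), s ∉ S := measure_eq_zero_iff_ae_notMem.mp hS0
    filter_upwards [hnm] with s hs1 hs2
    rw [Set.uIoc_of_le (by linarith : -Δ ≤ Δ)] at hs2
    have hsabs : |s| ≤ Δ := abs_le.2 ⟨hs2.1.le, hs2.2⟩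
    have hbx : |x + s| ≤ (2 : ℝ) ^ (B - 1) * Δ - Δ / 2 := by
      calc |x + s| ≤ |x| + |s| := abs_add_le _ _
      _ ≤ ((2 : ℝ) ^ (B - 1) - 1) * Δ - Δ / 2 + Δ := by linarith
      _ = (2 : ℝ) ^ (B - 1) * Δ - Δ / 2 := by ring
    have hby : |y + s| ≤ (2 : ℝ) ^ (B - 1) * Δ - Δ / 2 := by
      calc |y + s| ≤ |y| + |s| := abs_add_le _ _
      _ ≤ ((2 : ℝ) ^ (B - 1) - 1) * Δ - Δ / 2 + Δ := by linarith
      _ = (2 : ℝ) ^ (B - 1) * Δ - Δ / 2 := by ring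
    have hnzx : ∀ n : ℤ, x + s ≠ (n : ℝ) * Δ := by
      intro n h
      exact hs1 (Or.inl (Set.mem_iUnion.2 ⟨n, by simp; linarith⟩))
    have hnzy : ∀ n : ℤ, y + s ≠ (n : ℝ) * Δ := by
      intro n h
      exact hs1 (Or.inr (Set.mem_iUnion.2 ⟨n, by simp; linarith⟩))
    rw [abs_sub_comm, abs_of_nonneg (sub_nonneg.2 (hmono (by linarith : x + s ≤ y + s))),
      quant_formula Δ hΔ B q hq (x + s) hbx hnzx,
      quant_formula Δ hΔ B q hq (y + s) hby hnzy]
    ring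
  rw [intervalIntegral.integral_congr_ae hae]
  have hsub : IntervalIntegrable
      (fun s => Int.fract ((x + s) / Δ) - Int.fract ((y + s) / Δ)) volume (-Δ) Δ :=
    (fract_intble Δ hΔ x _ _).sub (fract_intble Δ hΔ y _ _)
  rw [intervalIntegral.integral_add intervalIntegrable_const (hsub.const_mul Δ),
    intervalIntegral.integral_const_mul,
    intervalIntegral.integral_sub (fract_intble Δ hΔ x _ _) (fract_intble Δ hΔ y _ _),
    fract_shift Δ hΔ x y, sub_self, mul_zero, add_zero, intervalIntegral.integral_const,
    smul_eq_mul]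
  field_simp
  ring

theorem dithered_quantizer_distance_unbiased (Δ : ℝ) (hΔ : 0 < Δ) (B : ℕ) (hB : 1 ≤ B)
    (q : ℝ → ℝ)
    (hq : ∀ y : ℝ, q y ∈ alphabet Δ B ∧ ∀ l ∈ alphabet Δ B, |y - q y| ≤ |y - l|)
    (hmono : Monotone q)
    (x y : ℝ) (hx : |x| ≤ ((2 : ℝ) ^ (B - 1) - 1) * Δ - Δ / 2)
    (hy : |y| ≤ ((2 : ℝ) ^ (B - 1) - 1) * Δ - Δ / 2) :
    (1 / (2 * Δ)) * ∫ s in (-Δ)..Δ, |q (x + s) - q (y + s)| = |x - y| := by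
  rcases le_total x y with h | h
  · rw [key_lemma Δ hΔ B hB q hq hmono x y hx hy h, abs_sub_comm,
      abs_of_nonneg (by linarith : (0:ℝ) ≤ y - x)]
  · rw [intervalIntegral.integral_congr
      (g := fun s => |q (y + s) - q (x + s)|) (fun s _ => abs_sub_comm _ _),
      key_lemma Δ hΔ B hB q hq hmono y x hy hx h,
      abs_of_nonneg (by linarith : (0:ℝ) ≤ x - y)]
end

section
/- Let ν be a real-valued random variable with E[ν²] < ∞, independent of τ ∼ Unif([−λ, λ]), and fix a real number s. Define Y := 1{sign(s + ν + τ) ≠ sign(s + τ)}·|ν|. Then E[Y] ≤ ‖ν‖²_{L²}/(2λ). -/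
open MeasureTheory

noncomputable def rsign (t : ℝ) : ℝ := if 0 ≤ t then 1 else -1

lemma rsign_measurable : Measurable rsign :=
  Measurable.ite (measurableSet_le measurable_const measurable_id)
    measurable_const measurable_const

lemma flip_subset (s x : ℝ) :
    {τ : ℝ | rsign (s + x + τ) ≠ rsign (s + τ)} ⊆
      Set.Ico (min (-(s+x)) (-s)) (max (-(s+x)) (-s)) := by
  intro τ hτ
  simp only [Set.mem_setOf_eq] at hτ
  rcases le_or_gt 0 (s + x + τ) with h1 | h1 <;> rcases le_or_gt 0 (s + τ) with h2 | h2
  · exact absurd (by simp [rsign, h1, h2]) hτ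
  · exact ⟨le_trans (min_le_left _ _) (by linarith),
      lt_of_lt_of_le (by linarith : τ < -s) (le_max_right _ _)⟩
  · exact ⟨le_trans (min_le_right _ _) (by linarith),
      lt_of_lt_of_le (by linarith : τ < -(s+x)) (le_max_left _ _)⟩
  · exact absurd (by simp [rsign, not_le.mpr h1, not_le.mpr h2]) hτ

lemma flip_set_measurable (s x : ℝ) :
    MeasurableSet {τ : ℝ | rsign (s + x + τ) ≠ rsign (s + τ)} := by
  have h1 : Measurable fun τ : ℝ => rsign (s + x + τ) :=
    rsign_measurable.comp (measurable_const.add measurable_id)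
  have h2 : Measurable fun τ : ℝ => rsign (s + τ) :=
    rsign_measurable.comp (measurable_const.add measurable_id)
  exact (measurableSet_eq_fun h1 h2).compl

theorem expected_noise_flip_bound {Ω : Type*} [MeasurableSpace Ω]
    (μ : Measure Ω) [IsProbabilityMeasure μ] (ν : Ω → ℝ) (hν : Measurable ν)
    (hν2 : Integrable (fun ω => (ν ω) ^ 2) μ)
    (lam : ℝ) (hlam : 0 < lam) (s : ℝ) :
    (∫ p : Ω × ℝ,
        (if rsign (s + ν p.1 + p.2) ≠ rsign (s + p.2) then |ν p.1| else 0)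
        ∂(μ.prod ((ENNReal.ofReal (2 * lam))⁻¹ •
            (volume.restrict (Set.Icc (-lam) lam))))) ≤
      (∫ ω, (ν ω) ^ 2 ∂μ) / (2 * lam) := by
  set σ : Measure ℝ :=
    (ENNReal.ofReal (2 * lam))⁻¹ • (volume.restrict (Set.Icc (-lam) lam)) with hσ
  set F : Ω × ℝ → ℝ :=
    fun p => if rsign (s + ν p.1 + p.2) ≠ rsign (s + p.2) then |ν p.1| else 0 with hF
  have hlam2 : (0:ℝ) < 2 * lam := by linarith
  -- measurability of F
  have hS : MeasurableSet {p : Ω × ℝ | rsign (s + ν p.1 + p.2) ≠ rsign (s + p.2)} := by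
    have h1 : Measurable fun p : Ω × ℝ => rsign (s + ν p.1 + p.2) :=
      rsign_measurable.comp (((measurable_const.add (hν.comp measurable_fst)).add
        measurable_snd))
    have h2 : Measurable fun p : Ω × ℝ => rsign (s + p.2) :=
      rsign_measurable.comp (measurable_const.add measurable_snd)
    exact (measurableSet_eq_fun h1 h2).compl
  have hFmeas : Measurable F :=
    Measurable.ite hS (hν.comp measurable_fst).abs measurable_const
  have hF0 : 0 ≤ᵐ[μ.prod σ] F := by
    filter_upwards with p
    simp only [hF, Pi.zero_apply]
    split
    · exact abs_nonneg _
    · exact le_refl 0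
  rw [integral_eq_lintegral_of_nonneg_ae hF0 hFmeas.aestronglyMeasurable]
  have key : (∫⁻ p, ENNReal.ofReal (F p) ∂(μ.prod σ)) ≤
      ENNReal.ofReal (∫ ω, (ν ω) ^ 2 ∂μ) * (ENNReal.ofReal (2 * lam))⁻¹ := by
    rw [lintegral_prod _ (hFmeas.ennreal_ofReal).aemeasurable]
    have inner : ∀ ω : Ω, (∫⁻ τ, ENNReal.ofReal (F (ω, τ)) ∂σ) ≤
        ENNReal.ofReal ((ν ω) ^ 2) * (ENNReal.ofReal (2 * lam))⁻¹ := by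
      intro ω
      set x := ν ω with hx
      have hind : (fun τ => ENNReal.ofReal (F (ω, τ))) =
          Set.indicator {τ : ℝ | rsign (s + x + τ) ≠ rsign (s + τ)}
            (fun _ => ENNReal.ofReal |x|) := by
        funext τ
        simp only [hF, Set.indicator]
        by_cases h : rsign (s + x + τ) ≠ rsign (s + τ) <;> simp [h, ← hx]
      rw [hind, lintegral_indicator (flip_set_measurable s x) _]
      simp only [lintegral_const, Measure.restrict_apply MeasurableSet.univ, Set.univ_inter]
      have hm : σ {τ : ℝ | rsign (s + x + τ) ≠ rsign (s + τ)} ≤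
          (ENNReal.ofReal (2 * lam))⁻¹ * ENNReal.ofReal |x| := by
        rw [hσ]
        simp only [Measure.smul_apply, smul_eq_mul]
        refine mul_le_mul_right ?_ _
        calc (volume.restrict (Set.Icc (-lam) lam))
              {τ : ℝ | rsign (s + x + τ) ≠ rsign (s + τ)}
            ≤ volume {τ : ℝ | rsign (s + x + τ) ≠ rsign (s + τ)} :=
              Measure.restrict_le_self _
          _ ≤ volume (Set.Ico (min (-(s+x)) (-s)) (max (-(s+x)) (-s))) :=
              measure_mono (flip_subset s x)
          _ = ENNReal.ofReal |x| := by
              rw [Real.volume_Ico, max_sub_min_eq_abs]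
              congr 1
              rw [show -s - -(s+x) = x by ring]
      calc ENNReal.ofReal |x| * σ {τ : ℝ | rsign (s + x + τ) ≠ rsign (s + τ)}
          ≤ ENNReal.ofReal |x| * ((ENNReal.ofReal (2 * lam))⁻¹ * ENNReal.ofReal |x|) :=
            mul_le_mul_right hm _
        _ = ENNReal.ofReal (x ^ 2) * (ENNReal.ofReal (2 * lam))⁻¹ := by
            rw [← mul_assoc, mul_comm (ENNReal.ofReal |x|) _, mul_assoc,
              ← ENNReal.ofReal_mul (abs_nonneg x), ← abs_mul, ← sq, abs_sq, mul_comm]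
    calc (∫⁻ ω, ∫⁻ τ, ENNReal.ofReal (F (ω, τ)) ∂σ ∂μ)
        ≤ ∫⁻ ω, ENNReal.ofReal ((ν ω) ^ 2) * (ENNReal.ofReal (2 * lam))⁻¹ ∂μ :=
          lintegral_mono inner
      _ = (∫⁻ ω, ENNReal.ofReal ((ν ω) ^ 2) ∂μ) * (ENNReal.ofReal (2 * lam))⁻¹ :=
          lintegral_mul_const _ (hν.pow_const 2).ennreal_ofReal
      _ = ENNReal.ofReal (∫ ω, (ν ω) ^ 2 ∂μ) * (ENNReal.ofReal (2 * lam))⁻¹ := by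
          rw [ofReal_integral_eq_lintegral_ofReal hν2
            (Filter.Eventually.of_forall fun ω => sq_nonneg _)]
  have hfin : ENNReal.ofReal (∫ ω, (ν ω) ^ 2 ∂μ) * (ENNReal.ofReal (2 * lam))⁻¹ ≠ ⊤ :=
    ENNReal.mul_ne_top ENNReal.ofReal_ne_top
      (ENNReal.inv_ne_top.mpr (by simp [ENNReal.ofReal_pos.mpr hlam2, ne_of_gt, hlam]))
  calc (∫⁻ p, ENNReal.ofReal (F p) ∂(μ.prod σ)).toReal
      ≤ (ENNReal.ofReal (∫ ω, (ν ω) ^ 2 ∂μ) * (ENNReal.ofReal (2 * lam))⁻¹).toReal :=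
        ENNReal.toReal_mono hfin key
    _ = (∫ ω, (ν ω) ^ 2 ∂μ) / (2 * lam) := by
        rw [ENNReal.toReal_mul, ENNReal.toReal_inv, ENNReal.toReal_ofReal
          (integral_nonneg fun ω => sq_nonneg _), ENNReal.toReal_ofReal hlam2.le,
          div_eq_mul_inv]
end
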